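/- arXiv:2507.10352 — 2 statements merged into one kernel-verified Lean document; each statement's English description precedes it below -/
import Mathlib

section
/- For all real x and y: x·y ≥ 0 and y²(1 + (cx)²) = (cx)² (with c > 0 fixed) hold if and only if y = cx / sqrt(1 + (cx)²). That is, the graph of λ̂_tanh is exactly the semialgebraic set {(x,y) : xy ≥ 0, y²(1 + (cx)²) = (cx)²}. -/
theorem tanh_approx_graph (c : ℝ) (hc : 0 < c) :
    ∀ x y : ℝ,
      (0 ≤ x * y ∧ y ^ 2 * (1 + (c * x) ^ 2) = (c * x) ^ 2) ↔
        y = c * x / Real.sqrt (1 + (c * x) ^ 2) := by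
  intro x y
  have hpos : (0:ℝ) < 1 + (c * x) ^ 2 := by positivity
  have hs : 0 < Real.sqrt (1 + (c * x) ^ 2) := Real.sqrt_pos.2 hpos
  have hsq : Real.sqrt (1 + (c * x) ^ 2) ^ 2 = 1 + (c * x) ^ 2 :=
    Real.sq_sqrt hpos.le
  constructor
  · rintro ⟨hxy, heq⟩
    have h1 : (y * Real.sqrt (1 + (c * x) ^ 2)) ^ 2 = (c * x) ^ 2 := by
      rw [mul_pow, hsq]; exact heq
    rcases sq_eq_sq_iff_eq_or_eq_neg.mp h1 with h | h
    · field_simp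
      rw [mul_pow] at h
      linarith [h]
    · -- y * s = -(c*x); show both sides are 0
      have h' : x * y * Real.sqrt (1 + (c * x) ^ 2) = -(c * x ^ 2) := by
        rw [mul_assoc, h]; ring
      have hx : x * y ≤ 0 := by
        nlinarith [h', hs, mul_nonneg hc.le (sq_nonneg x)]
      have hxy0 : x * y = 0 := le_antisymm hx hxy
      rcases mul_eq_zero.mp hxy0 with hx0 | hy0
      · have : y * Real.sqrt (1 + (c * x) ^ 2) = 0 := by rw [h, hx0]; ring
        have hy0 : y = 0 := by
          rcases mul_eq_zero.mp this with h' | h'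
          · exact h'
          · exact absurd h' hs.ne'
        rw [hy0, hx0]; simp
      · have hx0 : c * x = 0 := by
          have := h; rw [hy0] at this; linarith
        rw [hy0, hx0]; simp
  · intro hy
    subst hy
    constructor
    · rw [div_eq_mul_inv]
      have : x * (c * x * (Real.sqrt (1 + (c * x) ^ 2))⁻¹)
          = c * x ^ 2 * (Real.sqrt (1 + (c * x) ^ 2))⁻¹ := by ring
      rw [this]
      positivity
    · rw [div_pow]
      rw [hsq]
      field_simp
end

section
/- Strict Minimum at Origin Lemma: Let X ⊆ ℝⁿ be a set with 0 ∈ X that is invariant under the map F : ℝⁿ → ℝⁿ (i.e., x ∈ X implies F(x) ∈ X), and suppose X is closed. Let V : ℝⁿ → ℝ be continuous and satisfy V(x) - V(F(x)) - ‖x‖² ≥ 0 and V(x) ≥ 0 for all x ∈ X. Then V(0) < V(x) for all x ∈ X with x ≠ 0; equivalently, the set of minimizers of V over X is exactly {0}. -/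
theorem strict_minimum_at_origin {n : ℕ}
    (X : Set (EuclideanSpace ℝ (Fin n))) (F : EuclideanSpace ℝ (Fin n) → EuclideanSpace ℝ (Fin n))
    (V : EuclideanSpace ℝ (Fin n) → ℝ)
    (hX0 : (0 : EuclideanSpace ℝ (Fin n)) ∈ X)
    (hXclosed : IsClosed X)
    (hXinv : ∀ x ∈ X, F x ∈ X)
    (hVcont : Continuous V)
    (hVdec : ∀ x ∈ X, V x - V (F x) - ‖x‖ ^ 2 ≥ 0)
    (hVnonneg : ∀ x ∈ X, V x ≥ 0) :
    (∀ x ∈ X, x ≠ 0 → V 0 < V x) ∧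
    {x ∈ X | ∀ y ∈ X, V x ≤ V y} = {0} := by
  have key : ∀ x ∈ X, V 0 + ‖x‖ ^ 2 ≤ V x := by
    intro x hx
    set s : ℕ → EuclideanSpace ℝ (Fin n) := fun k => F^[k] x with hs
    have hmem : ∀ k, s k ∈ X := by
      intro k
      induction k with
      | zero => simpa [hs] using hx
      | succ k ih =>
        have : s (k + 1) = F (s k) := Function.iterate_succ_apply' F k x
        rw [this]; exact hXinv _ ih
    have hstep : ∀ k, V (s (k + 1)) + ‖s k‖ ^ 2 ≤ V (s k) := by
      intro k
      have h1 : s (k + 1) = F (s k) := Function.iterate_succ_apply' F k x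
      have := hVdec (s k) (hmem k)
      rw [h1]; linarith
    have hanti : Antitone fun k => V (s k) := by
      apply antitone_nat_of_succ_le
      intro k
      have := hstep k
      have hn : (0:ℝ) ≤ ‖s k‖ ^ 2 := sq_nonneg _
      linarith
    have hbdd : BddBelow (Set.range fun k => V (s k)) := by
      refine ⟨0, ?_⟩
      rintro y ⟨k, rfl⟩
      exact hVnonneg _ (hmem k)
    have hL : Filter.Tendsto (fun k => V (s k)) Filter.atTop (nhds (⨅ k, V (s k))) :=
      tendsto_atTop_ciInf hanti hbdd
    have hL' : Filter.Tendsto (fun k => V (s (k + 1))) Filter.atTop (nhds (⨅ k, V (s k))) :=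
      hL.comp (Filter.tendsto_add_atTop_nat 1)
    have hdiff : Filter.Tendsto (fun k => V (s k) - V (s (k + 1))) Filter.atTop (nhds 0) := by
      have := hL.sub hL'
      simpa using this
    have hsq : Filter.Tendsto (fun k => ‖s k‖ ^ 2) Filter.atTop (nhds 0) := by
      apply squeeze_zero (fun k => sq_nonneg _) (fun k => ?_) hdiff
      have := hstep k; linarith
    have hnorm : Filter.Tendsto (fun k => ‖s k‖) Filter.atTop (nhds 0) := by
      have := (Real.continuous_sqrt.tendsto 0).comp hsq
      have heq : ((fun x => Real.sqrt x) ∘ fun k => ‖s k‖ ^ 2) = fun k => ‖s k‖ := by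
        funext k; simp [Real.sqrt_sq (norm_nonneg _)]
      rw [heq] at this
      simpa using this
    have hx0 : Filter.Tendsto s Filter.atTop (nhds 0) :=
      tendsto_zero_iff_norm_tendsto_zero.mpr hnorm
    have hV0 : Filter.Tendsto (fun k => V (s k)) Filter.atTop (nhds (V 0)) :=
      (hVcont.tendsto 0).comp hx0
    have hLeq : (⨅ k, V (s k)) = V 0 := tendsto_nhds_unique hL hV0
    have h1 : V 0 ≤ V (s 1) := by
      rw [← hLeq]; exact ciInf_le hbdd 1
    have h0 : s 0 = x := rfl
    have := hstep 0
    rw [h0] at this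
    linarith
  constructor
  · intro x hx hne
    have := key x hx
    have hpos : (0:ℝ) < ‖x‖ ^ 2 := pow_pos (norm_pos_iff.mpr hne) 2
    linarith
  · ext x
    simp only [Set.mem_setOf_eq, Set.mem_singleton_iff]
    constructor
    · rintro ⟨hxX, hmin⟩
      by_contra hne
      have h1 := key x hxX
      have h2 := hmin 0 hX0
      have hpos : (0:ℝ) < ‖x‖ ^ 2 := pow_pos (norm_pos_iff.mpr hne) 2
      linarith
    · rintro rfl
      refine ⟨hX0, fun y hy => ?_⟩
      have := key y hy
      have : (0:ℝ) ≤ ‖y‖ ^ 2 := sq_nonneg _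
      linarith [key y hy]
end
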